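/- Let C ≥ 1 and let a, b, h > 0 satisfy 1 ≤ b/a ≤ C and h/b ≥ C. With D(x) = (1 - x/h)·a + (x/h)·b and v(x,y) = a·y/D(x) defined on the trapezoid Q = {(x,y) : 0 ≤ x ≤ h, 0 ≤ y ≤ D(x)}, there exists a constant M depending only on C such that ∬_Q |∇v|² dx dy ≤ M · h · a. -/

import Mathlib

open MeasureTheory


lemma stmt_7_aux (Cc d a y c : ℝ) (hC : 1 ≤ Cc) (ha : 0 < a) (hy : 0 ≤ y)
    (hc : 0 ≤ c) (had : a ≤ d) (hyd : y ≤ d) (hcC : c ≤ Cc - 1) :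
    ((0 * d - a * y * c) / d ^ 2) ^ 2 + ((a * 1) / d) ^ 2 ≤ Cc ^ 2 + 1 := by
  have hd : 0 < d := lt_of_lt_of_le ha had
  have h1 : ((0 * d - a * y * c) / d ^ 2) ^ 2 ≤ Cc ^ 2 := by
    rw [div_pow, div_le_iff₀ (by positivity)]
    have hayc : 0 ≤ a * y * c := by positivity
    have hay : a * y ≤ d ^ 2 := by nlinarith
    have h2 : a * y * c ≤ d ^ 2 * (Cc - 1) :=
      le_trans (mul_le_mul_of_nonneg_right hay hc)
        (mul_le_mul_of_nonneg_left hcC (sq_nonneg d))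
    nlinarith [sq_nonneg d, sq_nonneg (d^2)]
  have h3 : ((a * 1) / d) ^ 2 ≤ 1 := by
    rw [div_pow, div_le_one (by positivity)]
    nlinarith
  linarith

theorem stmt_7 (C : ℝ) (hC : 1 ≤ C) :
    ∃ M : ℝ, ∀ a b h : ℝ, 0 < a → 0 < b → 0 < h →
      1 ≤ b / a → b / a ≤ C → C ≤ h / b →
      ∀ D : ℝ → ℝ, (∀ x, D x = (1 - x / h) * a + (x / h) * b) →
      ∀ v : ℝ → ℝ → ℝ, (∀ x y, v x y = a * y / D x) →
        (∫ p in {p : ℝ × ℝ | p.1 ∈ Set.Icc (0:ℝ) h ∧ p.2 ∈ Set.Icc (0:ℝ) (D p.1)},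
            ((deriv (fun x' => v x' p.2) p.1) ^ 2 +
              (deriv (fun y' => v p.1 y') p.2) ^ 2)) ≤ M * h * a := by
  refine ⟨(C ^ 2 + 1) * C, fun a b h ha hb hh hba1 hbaC hChb D hD v hv => ?_⟩
  have hab : a ≤ b := (one_le_div ha).mp hba1
  have hbCa : b ≤ C * a := (div_le_iff₀ ha).mp hbaC
  have hCbh : C * b ≤ h := (le_div_iff₀ hb).mp hChb
  have hbh : b ≤ h := le_trans (le_mul_of_one_le_left hb.le hC) hCbh
  have hah : a ≤ h := hab.trans hbh
  have hDfun : D = fun x => a + (x / h) * (b - a) := by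
    funext x; rw [hD x]; ring
  set s : Set (ℝ × ℝ) :=
    {p : ℝ × ℝ | p.1 ∈ Set.Icc (0:ℝ) h ∧ p.2 ∈ Set.Icc (0:ℝ) (D p.1)} with hs
  -- measurability of the set
  have hDcont : Continuous D := by
    rw [hDfun]; continuity
  have hsm : MeasurableSet s := by
    have h1 : MeasurableSet {p : ℝ × ℝ | p.1 ∈ Set.Icc (0:ℝ) h} :=
      (measurableSet_Icc : MeasurableSet (Set.Icc (0:ℝ) h)).preimage measurable_fst
    have h2 : MeasurableSet {p : ℝ × ℝ | (0:ℝ) ≤ p.2} :=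
      measurableSet_le measurable_const measurable_snd
    have h3 : MeasurableSet {p : ℝ × ℝ | p.2 ≤ D p.1} :=
      measurableSet_le measurable_snd (hDcont.measurable.comp measurable_fst)
    have : s = {p : ℝ × ℝ | p.1 ∈ Set.Icc (0:ℝ) h} ∩
        ({p : ℝ × ℝ | (0:ℝ) ≤ p.2} ∩ {p : ℝ × ℝ | p.2 ≤ D p.1}) := by
      ext p; simp [hs, Set.mem_Icc, and_assoc]
    rw [this]
    exact h1.inter (h2.inter h3)
  -- pointwise bound on the integrand
  have key : ∀ p : ℝ × ℝ, p ∈ s →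
      (deriv (fun x' => v x' p.2) p.1) ^ 2 + (deriv (fun y' => v p.1 y') p.2) ^ 2
        ≤ C ^ 2 + 1 := by
    rintro ⟨x, y⟩ ⟨⟨hx0, hxh⟩, hy0, hyD⟩
    have hth : 0 ≤ x / h := div_nonneg hx0 hh.le
    have hth1 : x / h ≤ 1 := (div_le_one hh).mpr hxh
    have hDlb : a ≤ D x := by
      rw [hDfun]; dsimp only; nlinarith
    have hDub : D x ≤ b := by
      rw [hDfun]; dsimp only; nlinarith
    have hDpos : 0 < D x := lt_of_lt_of_le ha hDlb
    have hyDx : y ≤ D x := hyD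
    have hc : (0:ℝ) ≤ (b - a) / h := div_nonneg (by linarith) hh.le
    have hcC : (b - a) / h ≤ C - 1 := by
      rw [div_le_iff₀ hh]; nlinarith
    -- derivative in x
    have hgd : HasDerivAt (fun x' => (1 - x' / h) * a + (x' / h) * b) ((b - a) / h) x := by
      have h1 : HasDerivAt (fun x' : ℝ => x' / h) (1 / h) x := by
        simpa using (hasDerivAt_id x).div_const h
      have h2 : HasDerivAt (fun x' : ℝ => 1 - x' / h) (-(1 / h)) x := by
        simpa using h1.const_sub (1:ℝ)
      have h3 : HasDerivAt (fun x' => (1 - x' / h) * a + (x' / h) * b) (-(1 / h) * a + 1 / h * b) x :=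
        (h2.mul_const a).add (h1.mul_const b)
      convert h3 using 1
      ring
    have hgd' : HasDerivAt D ((b - a) / h) x := by
      have : D = fun x' => (1 - x' / h) * a + (x' / h) * b := funext hD
      rw [this]; exact hgd
    have hdx : HasDerivAt (fun x' => v x' y)
        ((0 * D x - a * y * ((b - a) / h)) / (D x) ^ 2) x := by
      have heq : (fun x' => v x' y) = fun x' => (a * y) / D x' := by
        funext x'; rw [hv]
      rw [heq]
      exact (hasDerivAt_const x (a * y)).div hgd' (ne_of_gt hDpos)
    have hdy : HasDerivAt (fun y' => v x y') ((a * 1) / D x) y := by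
      have heq : (fun y' => v x y') = fun y' => (a * y') / D x := by
        funext y'; rw [hv]
      rw [heq]
      exact ((hasDerivAt_id y).const_mul a).div_const (D x)
    rw [hdx.deriv, hdy.deriv]
    exact stmt_7_aux C (D x) a y ((b - a) / h) hC ha hy0 hc hDlb hyDx hcC
  -- measure bound
  have hsub : s ⊆ Set.Icc (0:ℝ) h ×ˢ Set.Icc (0:ℝ) b := by
    rintro ⟨x, y⟩ ⟨⟨hx0, hxh⟩, hy0, hyD⟩
    have hth : 0 ≤ x / h := div_nonneg hx0 hh.le
    have hth1 : x / h ≤ 1 := (div_le_one hh).mpr hxh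
    have hDub : D x ≤ b := by rw [hDfun]; dsimp only; nlinarith
    exact ⟨⟨hx0, hxh⟩, ⟨hy0, hyD.trans hDub⟩⟩
  have hμ : volume s ≤ ENNReal.ofReal (h * (C * a)) := by
    calc volume s ≤ volume (Set.Icc (0:ℝ) h ×ˢ Set.Icc (0:ℝ) b) := measure_mono hsub
      _ = ENNReal.ofReal (h - 0) * ENNReal.ofReal (b - 0) := by
          rw [Measure.volume_eq_prod, Measure.prod_prod, Real.volume_Icc, Real.volume_Icc]
      _ = ENNReal.ofReal (h * b) := by
          rw [sub_zero, sub_zero, ← ENNReal.ofReal_mul hh.le]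
      _ ≤ ENNReal.ofReal (h * (C * a)) := by
          apply ENNReal.ofReal_le_ofReal
          nlinarith
  have hfin : volume s < ⊤ := lt_of_le_of_lt hμ ENNReal.ofReal_lt_top
  have htr : (volume s).toReal ≤ h * (C * a) :=
    ENNReal.toReal_le_of_le_ofReal (by positivity) hμ
  have hbound := norm_setIntegral_le_of_norm_le_const (μ := volume) (f := fun p : ℝ × ℝ =>
      (deriv (fun x' => v x' p.2) p.1) ^ 2 + (deriv (fun y' => v p.1 y') p.2) ^ 2)
      hfin (fun p hp => by
        rw [Real.norm_eq_abs, abs_of_nonneg (by positivity)]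
        exact key p hp)
  calc (∫ p in s, ((deriv (fun x' => v x' p.2) p.1) ^ 2 +
          (deriv (fun y' => v p.1 y') p.2) ^ 2))
      ≤ ‖∫ p in s, ((deriv (fun x' => v x' p.2) p.1) ^ 2 +
          (deriv (fun y' => v p.1 y') p.2) ^ 2)‖ := le_abs_self _
    _ ≤ (C ^ 2 + 1) * (volume s).toReal := hbound
    _ ≤ (C ^ 2 + 1) * (h * (C * a)) := by
        apply mul_le_mul_of_nonneg_left htr (by positivity)
    _ = (C ^ 2 + 1) * C * h * a := by ring
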